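/- Let X ⊆ ℝ² be a bounded convex set and let l > 0. Let x ∈ X with x not in X_l and x not in the boundary ∂X, and set d = dist(x, ∂X) (so 0 < d < l). Then p_X(x, l) ≤ (1/(2π))·(π + 2·arcsin(d/l)). -/

import Mathlib

open MeasureTheory Metric Set Real Pointwise
open scoped ENNReal RealInnerProductSpace

noncomputable section

/-- The Euclidean plane. -/
abbrev Plane := EuclideanSpace ℝ (Fin 2)

/-- The unit vector in the plane making angle `θ` with the horizontal axis. -/
def needleDir (θ : ℝ) : Plane :=
  (EuclideanSpace.equiv (Fin 2) ℝ).symm ![Real.cos θ, Real.sin θ]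

/-- The set of directions `θ ∈ [0, 2π)` for which the needle of length `l`
originating at `x` has its other endpoint in `X`. -/
def needleAngles (X : Set Plane) (l : ℝ) (x : Plane) : Set ℝ :=
  {θ ∈ Set.Ico 0 (2 * π) | x + l • needleDir θ ∈ X}

/-- The pointwise probability `p_X(x, l)` that a random needle of length `l` at `x`
lies within `X`. -/
def pointwiseProb (X : Set Plane) (x : Plane) (l : ℝ) : ℝ :=
  (1 / (2 * π)) * (volume (needleAngles X l x)).toReal

/-- The Buffon probability `P_X(l)` that a random needle of length `l` originating at a
uniformly chosen point of `X` lies within `X`; taken to be `0` when `X` has zero area. -/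
def buffonProb (X : Set Plane) (l : ℝ) : ℝ :=
  if volume X = 0 then 0
  else (1 / (2 * π * (volume X).toReal)) *
    ∫ x in X, (volume (needleAngles X l x)).toReal

/-- The interior parallel `X_r`: the Minkowski difference of `X` with the closed ball
of radius `r`. -/
def innerParallel (X : Set Plane) (r : ℝ) : Set Plane :=
  {x : Plane | Metric.closedBall x r ⊆ X}

/-- The exterior parallel `X^r`: the Minkowski sum of `X` with the closed ball
of radius `r`. -/
def exterParallel (X : Set Plane) (r : ℝ) : Set Plane :=
  X + Metric.closedBall (0 : Plane) r

end

/-- pointwise bound on the probability for a point near the boundary. -/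

lemma aux_measure (φ c : ℝ) (hc0 : 0 ≤ c) (hc1 : c ≤ 1) :
    volume {θ | θ ∈ Set.Ico (0:ℝ) (2*π) ∧ Real.cos (θ - φ) ≤ c} ≤
      ENNReal.ofReal (π + 2 * Real.arcsin c) := by
  set β := Real.arccos c with hβ
  have hβ0 : 0 ≤ β := Real.arccos_nonneg c
  have hβdef : β = π/2 - Real.arcsin c := Real.arccos_eq_pi_div_two_sub_arcsin c
  have harcsin : 0 ≤ Real.arcsin c := Real.arcsin_nonneg.2 hc0
  have hβπ2 : β ≤ π/2 := by rw [hβdef]; linarith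
  have hβπ : β ≤ π := by linarith [Real.pi_pos]
  have hcosβ : Real.cos β = c := Real.cos_arccos (by linarith) hc1
  have h2π : (0:ℝ) < 2*π := Real.two_pi_pos
  set k : ℤ := ⌊φ / (2*π)⌋ with hk
  set φ' := φ - k * (2*π) with hφ'
  have hφ'0 : 0 ≤ φ' := Int.sub_floor_div_mul_nonneg φ h2π
  have hφ'lt : φ' < 2*π := Int.sub_floor_div_mul_lt φ h2π
  have hcos : ∀ θ : ℝ, Real.cos (θ - φ) = Real.cos (θ - φ') := by
    intro θ
    rw [show θ - φ' = (θ - φ) + k * (2*π) by rw [hφ']; ring, Real.cos_add_int_mul_two_pi]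
  have hclose : ∀ θ : ℝ, |θ - φ'| < β → c < Real.cos (θ - φ) := by
    intro θ h
    rw [hcos θ, ← Real.cos_abs, ← hcosβ]
    exact Real.cos_lt_cos_of_nonneg_of_le_pi (abs_nonneg _) hβπ h
  obtain ⟨T, hTm, hTsub, hTgt, hTvol⟩ : ∃ T : Set ℝ, MeasurableSet T ∧ T ⊆ Set.Ico 0 (2*π) ∧
      (∀ θ ∈ T, c < Real.cos (θ - φ)) ∧ volume T = ENNReal.ofReal (2*β) := by
    rcases lt_or_ge φ' β with h1 | h1
    · refine ⟨Set.Ioo 0 (φ'+β) ∪ Set.Ioo (φ'+2*π-β) (2*π), ?_, ?_, ?_, ?_⟩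
      · exact (measurableSet_Ioo).union measurableSet_Ioo
      · rintro θ (hθ | hθ) <;> constructor <;>
          simp only [Set.mem_Ioo] at hθ <;> first | linarith [hθ.1, hθ.2]
      · rintro θ (hθ | hθ) <;> simp only [Set.mem_Ioo] at hθ
        · exact hclose θ (abs_lt.2 ⟨by linarith, by linarith⟩)
        · have : Real.cos (θ - φ') = Real.cos (θ - φ' - 2*π) :=
            (Real.cos_sub_two_pi (θ - φ')).symm
          rw [hcos θ, this, ← Real.cos_abs, ← hcosβ]
          exact Real.cos_lt_cos_of_nonneg_of_le_pi (abs_nonneg _) hβπ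
            (abs_lt.2 ⟨by linarith, by linarith⟩)
      · rw [measure_union (by
            apply Set.disjoint_left.2
            rintro θ hθ hθ'
            simp only [Set.mem_Ioo] at hθ hθ'
            linarith [hθ.2, hθ'.1]) measurableSet_Ioo,
          Real.volume_Ioo, Real.volume_Ioo, ← ENNReal.ofReal_add (by linarith) (by linarith)]
        congr 1; ring
    · rcases lt_or_ge (2*π - β) φ' with h2 | h2
      · refine ⟨Set.Ioo (φ'-β) (2*π) ∪ Set.Ioo 0 (φ'+β-2*π), ?_, ?_, ?_, ?_⟩
        · exact (measurableSet_Ioo).union measurableSet_Ioo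
        · rintro θ (hθ | hθ) <;> constructor <;>
            simp only [Set.mem_Ioo] at hθ <;> first | linarith [hθ.1, hθ.2]
        · rintro θ (hθ | hθ) <;> simp only [Set.mem_Ioo] at hθ
          · exact hclose θ (abs_lt.2 ⟨by linarith, by linarith⟩)
          · have : Real.cos (θ - φ') = Real.cos (θ - φ' + 2*π) :=
              (Real.cos_add_two_pi (θ - φ')).symm
            rw [hcos θ, this, ← Real.cos_abs, ← hcosβ]
            exact Real.cos_lt_cos_of_nonneg_of_le_pi (abs_nonneg _) hβπ
              (abs_lt.2 ⟨by linarith, by linarith⟩)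
        · rw [measure_union (by
              apply Set.disjoint_left.2
              rintro θ hθ hθ'
              simp only [Set.mem_Ioo] at hθ hθ'
              linarith [hθ.1, hθ'.2]) measurableSet_Ioo,
            Real.volume_Ioo, Real.volume_Ioo, ← ENNReal.ofReal_add (by linarith) (by linarith)]
          congr 1; ring
      · refine ⟨Set.Ioo (φ'-β) (φ'+β), measurableSet_Ioo, ?_, ?_, ?_⟩
        · intro θ hθ; simp only [Set.mem_Ioo] at hθ
          exact ⟨by linarith [hθ.1], by linarith [hθ.2]⟩
        · intro θ hθ; simp only [Set.mem_Ioo] at hθ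
          exact hclose θ (abs_lt.2 ⟨by linarith, by linarith⟩)
        · rw [Real.volume_Ioo]; congr 1; ring
  have hdisj : Disjoint {θ | θ ∈ Set.Ico (0:ℝ) (2*π) ∧ Real.cos (θ - φ) ≤ c} T := by
    apply Set.disjoint_left.2
    rintro θ ⟨_, hθ2⟩ hθT
    exact absurd hθ2 (not_le.2 (hTgt θ hθT))
  have hunion : volume ({θ | θ ∈ Set.Ico (0:ℝ) (2*π) ∧ Real.cos (θ - φ) ≤ c} ∪ T)
      ≤ volume (Set.Ico (0:ℝ) (2*π)) :=
    measure_mono (Set.union_subset (fun θ hθ => hθ.1) hTsub)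
  rw [measure_union hdisj hTm, hTvol, Real.volume_Ico] at hunion
  have key : ENNReal.ofReal (2*π - 0) = ENNReal.ofReal (π + 2 * Real.arcsin c) + ENNReal.ofReal (2*β) := by
    rw [← ENNReal.ofReal_add (by linarith [Real.pi_pos]) (by linarith)]
    congr 1
    rw [hβdef]; ring
  rw [key] at hunion
  exact (ENNReal.add_le_add_iff_right ENNReal.ofReal_ne_top).1 hunion

theorem pointwiseProb_le (X : Set Plane) (hXb : Bornology.IsBounded X) (hXc : Convex ℝ X)
    (l : ℝ) (hl : 0 < l) (x : Plane) (hx : x ∈ X) (hxl : x ∉ innerParallel X l)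
    (hxb : x ∉ frontier X) (d : ℝ) (hd : d = Metric.infDist x (frontier X)) :
    pointwiseProb X x l ≤ (1 / (2 * π)) * (π + 2 * Real.arcsin (d / l)) := by
  have hπ : (0:ℝ) < π := Real.pi_pos
  have hXne : X.Nonempty := ⟨x, hx⟩
  have hXnu : X ≠ Set.univ := fun h => NormedSpace.unbounded_univ ℝ Plane (h ▸ hXb)
  have hfr : (frontier X).Nonempty := nonempty_frontier_iff.2 ⟨hXne, hXnu⟩
  have hfrc : IsCompact (frontier X) :=
    Metric.isCompact_of_isClosed_isBounded isClosed_frontier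
      (hXb.closure.subset frontier_subset_closure)
  obtain ⟨y, hyfr, hyd⟩ := hfrc.exists_infDist_eq_dist hfr x
  have hdpos : 0 < d := by
    rw [hd]; exact (isClosed_frontier.notMem_iff_infDist_pos hfr).1 hxb
  have hxint : x ∈ interior X := by
    by_contra h
    exact hxb ⟨subset_closure hx, h⟩
  have hynint : y ∉ interior X := hyfr.2
  obtain ⟨f, hf⟩ := geometric_hahn_banach_open_point hXc.interior isOpen_interior hynint
  have hfx : f x < f y := hf x hxint
  have hkey : ∀ z ∈ X, f z ≤ f y := by
    intro z hz
    have h1 : ∀ t : ℝ, t ∈ Set.Ioc (0:ℝ) 1 → f (z + t • (x - z)) < f y := fun t ht =>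
      hf _ (hXc.add_smul_sub_mem_interior hz hxint ht)
    have hcont : ContinuousAt (fun t : ℝ => f (z + t • (x - z))) 0 := by fun_prop
    have h2 : Filter.Tendsto (fun t : ℝ => f (z + t • (x - z)))
        (nhdsWithin 0 (Set.Ioi 0)) (nhds (f z)) := by
      have h3 : Filter.Tendsto (fun t : ℝ => f (z + t • (x - z))) (nhds 0) (nhds (f z)) := by
        have h4 := hcont.tendsto
        simpa using h4
      exact h3.mono_left nhdsWithin_le_nhds
    refine le_of_tendsto h2 ?_
    filter_upwards [Ioo_mem_nhdsGT_of_mem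
      (by constructor <;> norm_num : (0:ℝ) ∈ Set.Ico (0:ℝ) 1)] with t ht
    exact (h1 t ⟨ht.1, ht.2.le⟩).le
  set n : Plane := (InnerProductSpace.toDual ℝ Plane).symm f with hn
  have hinner : ∀ w : Plane, ⟪n, w⟫ = f w := fun w => InnerProductSpace.toDual_symm_apply
  have hnne : n ≠ 0 := by
    intro h
    have h1 : f x = 0 := by rw [← hinner x, h, inner_zero_left]
    have h2 : f y = 0 := by rw [← hinner y, h, inner_zero_left]
    rw [h1, h2] at hfx
    exact lt_irrefl _ hfx
  have hnpos : 0 < ‖n‖ := norm_pos_iff.2 hnne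
  set w : ℂ := ⟨n 0, n 1⟩ with hw
  have habs : ‖w‖ = ‖n‖ := by
    rw [Complex.norm_def, Complex.normSq_mk, EuclideanSpace.norm_eq]
    simp only [Fin.sum_univ_two, Real.norm_eq_abs, sq_abs]
    congr 1
    ring
  have hwne : w ≠ 0 := by
    intro h
    rw [h, norm_zero] at habs
    exact hnpos.ne habs
  set ψ := Complex.arg w with hψ
  have hcosψ : Real.cos ψ = n 0 / ‖n‖ := by rw [hψ, Complex.cos_arg hwne, habs]
  have hsinψ : Real.sin ψ = n 1 / ‖n‖ := by rw [hψ, Complex.sin_arg, habs]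
  set c := d / l with hc
  have hc0 : 0 ≤ c := div_nonneg hdpos.le hl.le
  have hsub : needleAngles X l x ⊆
      {θ | θ ∈ Set.Ico (0:ℝ) (2*π) ∧ Real.cos (θ - ψ) ≤ c} := by
    intro θ hθ
    simp only [needleAngles, Set.mem_setOf_eq] at hθ
    obtain ⟨hθI, hθX⟩ := hθ
    refine ⟨hθI, ?_⟩
    have h1 : f (x + l • needleDir θ) ≤ f y := hkey _ hθX
    rw [map_add, f.map_smul, smul_eq_mul] at h1
    have hnyx : ‖y - x‖ = d := by
      rw [← dist_eq_norm, dist_comm, ← hyd, hd]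
    have h3 : f y - f x ≤ ‖n‖ * d := by
      have h4 := real_inner_le_norm n (y - x)
      rw [hinner (y - x), map_sub, hnyx] at h4
      linarith
    have h4 : f (needleDir θ) = ‖n‖ * Real.cos (θ - ψ) := by
      rw [← hinner]
      have h5 : ⟪n, needleDir θ⟫ = n 0 * Real.cos θ + n 1 * Real.sin θ := by
        simp [PiLp.inner_apply, Fin.sum_univ_two, RCLike.inner_apply, needleDir]
        ring
      rw [h5, Real.cos_sub,
        show n 0 = ‖n‖ * Real.cos ψ by rw [hcosψ]; field_simp,
        show n 1 = ‖n‖ * Real.sin ψ by rw [hsinψ]; field_simp]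
      ring
    have h5 : l * (‖n‖ * Real.cos (θ - ψ)) ≤ ‖n‖ * d := by rw [← h4]; linarith
    have h6 : ‖n‖ * (Real.cos (θ - ψ) * l) ≤ ‖n‖ * d := by linarith
    have h7 := (mul_le_mul_iff_right₀ hnpos).1 h6
    rw [hc, le_div_iff₀ hl]
    exact h7
  have harcsin : 0 ≤ Real.arcsin c := Real.arcsin_nonneg.2 hc0
  have hcard : (volume (needleAngles X l x)).toReal ≤ π + 2 * Real.arcsin c := by
    rcases le_or_gt c 1 with hc1 | hc1
    · have h8 := (measure_mono hsub).trans (aux_measure ψ c hc0 hc1)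
      exact ENNReal.toReal_le_of_le_ofReal (by linarith) h8
    · have hvol : volume (needleAngles X l x) ≤ ENNReal.ofReal (2*π - 0) := by
        rw [← Real.volume_Ico]
        exact measure_mono (fun θ hθ => hθ.1)
      have h9 := ENNReal.toReal_le_of_le_ofReal (by linarith) hvol
      rw [Real.arcsin_of_one_le hc1.le]
      linarith
  unfold pointwiseProb
  have h2π : (0:ℝ) ≤ 1/(2*π) := by positivity
  exact mul_le_mul_of_nonneg_left hcard h2π
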